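/- Let G be a finitely generated abelian group presented as ℤ^m / L where L is generated by k vectors each with entries in {-1,0,1} and at most 3 nonzero entries. Then the torsion subgroup of G has order at most (3k)^(r/2), where r is the rank of the subgroup L. -/

import Mathlib

open Matrix

private lemma rowMatrix_eq {n p m' : ℕ} (y : Fin n → Fin m' → ℤ) (u : Fin p → Fin m' → ℤ)
    (C : Matrix (Fin n) (Fin p) ℤ) (h : ∀ i, y i = ∑ j, C i j • u j) :
    (Matrix.of y) = C * (Matrix.of u) := by
  ext i t
  rw [Matrix.mul_apply]
  have := congrFun (h i) t
  simpa [Finset.sum_apply] using this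

private lemma gram_transform {n p m' : ℕ} (C : Matrix (Fin n) (Fin p) ℤ)
    (A : Matrix (Fin p) (Fin m') ℤ) :
    (C * A) * (C * A)ᵀ = C * (A * Aᵀ) * Cᵀ := by
  rw [Matrix.transpose_mul]
  simp [Matrix.mul_assoc]

private lemma cast_det_gram {R : Type*} [CommRing R] {n m' : ℕ} (f : ℤ →+* R)
    (A : Matrix (Fin n) (Fin m') ℤ) :
    f ((A * Aᵀ).det) = ((A.map f) * (A.map f)ᵀ).det := by
  rw [f.map_det, RingHom.mapMatrix_apply, Matrix.map_mul, Matrix.transpose_map]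

private lemma det_gram_nonneg {n m' : ℕ} (A : Matrix (Fin n) (Fin m') ℝ) : 0 ≤ (A * Aᵀ).det := by
  have h : (A * Aᴴ).PosSemidef := Matrix.posSemidef_self_mul_conjTranspose A
  have ht : Aᴴ = Aᵀ := Matrix.conjTranspose_eq_transpose_of_trivial A
  rw [← ht]
  rw [h.1.det_eq_prod_eigenvalues]
  have : ∀ i, (0:ℝ) ≤ h.1.eigenvalues i := fun i => h.eigenvalues_nonneg i
  exact Finset.prod_nonneg (fun i _ => this i)

private lemma det_gram_ne_zero {n m' : ℕ} (A : Matrix (Fin n) (Fin m') ℚ)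
    (h : LinearIndependent ℚ (fun i => A i)) : (A * Aᵀ).det ≠ 0 := by
  intro hdet
  obtain ⟨x, hx, hmv⟩ := (Matrix.exists_mulVec_eq_zero_iff).2 hdet
  have h0 : x ⬝ᵥ (A * Aᵀ).mulVec x = 0 := by rw [hmv, dotProduct_zero]
  have hw : x ⬝ᵥ (A * Aᵀ).mulVec x = (Matrix.vecMul x A) ⬝ᵥ (Matrix.vecMul x A) := by
    rw [← Matrix.mulVec_mulVec, Matrix.dotProduct_mulVec, Matrix.mulVec_transpose]
  have hw0 : Matrix.vecMul x A = 0 := by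
    have h1 := hw ▸ h0
    ext t
    have hnn : ∀ t' ∈ Finset.univ, (0:ℚ) ≤ (Matrix.vecMul x A t') * (Matrix.vecMul x A t') :=
      fun t' _ => mul_self_nonneg _
    have := (Finset.sum_eq_zero_iff_of_nonneg hnn).1 h1 t (Finset.mem_univ t)
    simpa [mul_self_eq_zero] using this
  apply hx
  have := Fintype.linearIndependent_iff.1 h x ?_
  · ext i; exact this i
  · funext t
    have hv : Matrix.vecMul x A t = ∑ i, x i * A i t := by
      simp [Matrix.vecMul, dotProduct]
    have h2 := congrFun hw0 t
    rw [hv] at h2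
    simp only [Finset.sum_apply, Pi.smul_apply, smul_eq_mul, Pi.zero_apply]
    exact h2

private lemma detE_sq {o : ℕ} (σ : Equiv.Perm (Fin o)) (a : Fin o → ℤ) :
    (Matrix.of fun i j => if σ i = j then a i else 0).det ^ 2 = (∏ i, a i)^2 := by
  have hE : (Matrix.of fun i j => if σ i = j then a i else 0) =
      Matrix.diagonal a * σ.toPEquiv.toMatrix := by
    ext i j
    rw [Matrix.diagonal_mul]
    simp [PEquiv.toMatrix, Equiv.toPEquiv, Option.mem_def, eq_comm, mul_ite]
  rw [hE, Matrix.det_mul, Matrix.det_diagonal, Matrix.det_permutation]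
  rcases Int.units_eq_one_or (Equiv.Perm.sign σ) with h | h <;> simp [h, mul_pow]

set_option maxHeartbeats 1600000 in
/-- Let `G = ℤ^m / L` where `L` is generated by `k` vectors each with entries in
{-1,0,1} and at most 3 nonzero entries.  Then the torsion subgroup of `G` has order
at most `(3k)^(r/2)`, where `r` is the rank of `L`. -/
theorem stmt17 (m k : ℕ) (v : Fin k → (Fin m → ℤ))
    (hentries : ∀ j i, v j i = -1 ∨ v j i = 0 ∨ v j i = 1)
    (hnonzero : ∀ j, (Finset.univ.filter (fun i => v j i ≠ 0)).card ≤ 3)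
    (L : AddSubgroup (Fin m → ℤ)) (hL : L = AddSubgroup.closure (Set.range v))
    (r : ℕ) (hr : Module.finrank ℤ (AddSubgroup.toIntSubmodule L) = r) :
    ((Nat.card (AddCommGroup.torsion ((Fin m → ℤ) ⧸ L)) : ℝ)) ≤
      (3 * (k : ℝ)) ^ ((r : ℝ) / 2) := by
  classical
  set Lsub : Submodule ℤ (Fin m → ℤ) := AddSubgroup.toIntSubmodule L with hLsub
  have hspan : Lsub = Submodule.span ℤ (Set.range v) := by
    rw [hLsub, hL, ← Submodule.span_int_eq_addSubgroupClosure]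
    exact Submodule.toAddSubgroup_toIntSubmodule _
  -- the casting map to ℚ^m
  set φ : (Fin m → ℤ) →ₗ[ℤ] (Fin m → ℚ) :=
    { toFun := fun x i => (x i : ℚ)
      map_add' := fun x y => by funext i; push_cast; simp
      map_smul' := fun c x => by
        funext i
        simp only [Pi.smul_apply, smul_eq_mul, RingHom.id_apply, zsmul_eq_mul]
        push_cast; ring } with hφ
  have hφinj : Function.Injective φ := by
    intro x y hxy
    funext i
    have h2 : ((x i : ℚ)) = (y i : ℚ) := congrFun hxy i
    exact_mod_cast h2
  have hφker : LinearMap.ker φ = ⊥ := LinearMap.ker_eq_bot.2 hφinj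
  -- ℤ-independent implies ℚ-independent after casting
  have hindQ : ∀ {p : ℕ} (w : Fin p → Fin m → ℤ), LinearIndependent ℤ w →
      LinearIndependent ℚ (fun i => φ (w i)) := by
    intro p w hw
    exact (LinearIndependent.iff_fractionRing ℤ ℚ).1 (hw.map' φ hφker)
  -- the ℚ-span of the generators
  set V : Submodule ℚ (Fin m → ℚ) := Submodule.span ℚ (Set.range fun j => φ (v j)) with hV
  have hφLsubV : ∀ x ∈ Lsub, φ x ∈ V := by
    intro x hx
    rw [hspan] at hx
    induction hx using Submodule.span_induction with
    | mem y hy =>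
      obtain ⟨j, rfl⟩ := hy
      exact Submodule.subset_span ⟨j, rfl⟩
    | zero => simp
    | add y z _ _ hy hz => rw [map_add]; exact V.add_mem hy hz
    | smul c y _ hy => rw [_root_.map_smul]; exact V.smul_of_tower_mem c hy
  -- a basis of Lsub
  obtain ⟨nb, bLs⟩ := Submodule.basisOfPid (Pi.basisFun ℤ (Fin m)) Lsub
  have hnb : r = nb := by
    have := Module.finrank_eq_card_basis bLs
    rw [hr] at this
    simpa using this
  subst hnb
  -- finrank of V is r
  have hVr : Module.finrank ℚ ↥V = r := by
    set g : Fin r → (Fin m → ℚ) := fun c => φ ((bLs c : Fin m → ℤ)) with hg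
    have hg_ind : LinearIndependent ℚ g := by
      apply hindQ
      exact bLs.linearIndependent.map' Lsub.subtype (Submodule.ker_subtype _)
    have hg_span : Submodule.span ℚ (Set.range g) = V := by
      apply le_antisymm
      · rw [Submodule.span_le]
        rintro x ⟨c, rfl⟩
        exact hφLsubV _ (bLs c).2
      · rw [hV, Submodule.span_le]
        rintro x ⟨j, rfl⟩
        have hvj : v j ∈ Lsub := by
          rw [hspan]; exact Submodule.subset_span ⟨j, rfl⟩
        have hrepr := bLs.sum_repr ⟨v j, hvj⟩
        have : φ (v j) = ∑ c, (bLs.repr ⟨v j, hvj⟩ c) • g c := by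
          conv_lhs => rw [show v j = ((⟨v j, hvj⟩ : ↥Lsub) : Fin m → ℤ) from rfl, ← hrepr]
          push_cast [map_sum]
          congr 1
          funext c
          rw [_root_.map_smul]
        show φ (v j) ∈ Submodule.span ℚ (Set.range g)
        rw [this]
        exact Submodule.sum_mem _ (fun c _ =>
          Submodule.smul_of_tower_mem _ _ (Submodule.subset_span ⟨c, rfl⟩))
    rw [← hg_span]
    rw [finrank_span_eq_card hg_ind, Fintype.card_fin]
  -- select an independent subfamily of the generators
  obtain ⟨bset, hbsub, hbspan, hbind⟩ :=
    exists_linearIndependent ℚ (Set.range fun j => φ (v j))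
  have hbfin : bset.Finite := hbind.setFinite
  haveI : Fintype ↥bset := hbfin.fintype
  have hbcard : Fintype.card ↥bset = r := by
    rw [← Set.toFinset_card]
    rw [← finrank_span_set_eq_card hbind, hbspan, ← hV, hVr]
  obtain e : Fin r ≃ ↥bset := (Fintype.equivFinOfCardEq hbcard).symm
  have hchoice : ∀ x : ↥bset, ∃ j, φ (v j) = (x : Fin m → ℚ) := fun x => hbsub x.2
  choose jf hjf using hchoice
  set u : Fin r → (Fin m → ℤ) := fun i => v (jf (e i)) with hu
  have hφu : ∀ i, φ (u i) = ((e i : ↥bset) : Fin m → ℚ) := fun i => hjf (e i)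
  have hu_indQ : LinearIndependent ℚ (fun i => φ (u i)) := by
    have : (fun i => φ (u i)) = (fun (x : ↥bset) => (x : Fin m → ℚ)) ∘ e := by
      funext i; exact hφu i
    rw [this]
    exact hbind.comp e e.injective
  have hu_ind : LinearIndependent ℤ u :=
    LinearIndependent.of_comp φ ((LinearIndependent.iff_fractionRing ℤ ℚ).2 hu_indQ)
  have hu_spanV : Submodule.span ℚ (Set.range fun i => φ (u i)) = V := by
    have : (Set.range fun i => φ (u i)) = bset := by
      ext x
      constructor
      · rintro ⟨i, rfl⟩; show φ (u i) ∈ bset; rw [hφu i]; exact (e i).2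
      · intro hx
        refine ⟨e.symm ⟨x, hx⟩, ?_⟩
        show φ (u (e.symm ⟨x, hx⟩)) = x
        rw [hφu, e.apply_symm_apply]
    rw [this, hbspan]
  have hrk : r ≤ k := by
    have hinj : Function.Injective (fun i => jf (e i)) := by
      intro i i' h
      have h' : jf (e i) = jf (e i') := h
      have h2 : φ (u i) = φ (u i') := by
        show φ (v (jf (e i))) = φ (v (jf (e i')))
        rw [h']
      rw [hφu i, hφu i'] at h2
      exact e.injective (Subtype.ext h2)
    simpa using Fintype.card_le_of_injective _ hinj
  -- the submodule generated by the subfamily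
  set L' : Submodule ℤ (Fin m → ℤ) := Submodule.span ℤ (Set.range u) with hL'
  have hL'le : L' ≤ Lsub := by
    rw [hL', hspan, Submodule.span_le]
    rintro x ⟨i, rfl⟩
    exact Submodule.subset_span ⟨jf (e i), rfl⟩
  set bu : Module.Basis (Fin r) ℤ ↥L' := Module.Basis.span hu_ind with hbu
  -- the saturation S
  set T : Submodule ℤ ((Fin m → ℤ) ⧸ Lsub) := Submodule.torsion ℤ _ with hT
  set S : Submodule ℤ (Fin m → ℤ) := T.comap Lsub.mkQ with hS
  have hLsubS : Lsub ≤ S := by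
    intro x hx
    rw [hS, Submodule.mem_comap]
    have : Lsub.mkQ x = 0 := by rwa [Submodule.mkQ_apply, Submodule.Quotient.mk_eq_zero]
    rw [this]; exact zero_mem T
  have hL'S : L' ≤ S := le_trans hL'le hLsubS
  have hSV : ∀ x ∈ S, φ x ∈ V := by
    intro x hx
    rw [hS, Submodule.mem_comap, hT] at hx
    obtain ⟨c, hc⟩ := (Submodule.mem_torsion_iff _).1 hx
    have hcx : (c : ℤ) • x ∈ Lsub := by
      have hc' : (c : ℤ) • Lsub.mkQ x = 0 := hc
      have hmk : Lsub.mkQ ((c : ℤ) • x) = 0 := by rw [_root_.map_smul]; exact hc'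
      rwa [Submodule.mkQ_apply, Submodule.Quotient.mk_eq_zero] at hmk
    have hmem := hφLsubV _ hcx
    rw [_root_.map_smul] at hmem
    have hc0 : ((c : ℤ) : ℚ) ≠ 0 := by
      exact_mod_cast nonZeroDivisors.coe_ne_zero c
    have : φ x = ((c : ℤ) : ℚ)⁻¹ • (((c : ℤ) : ℚ) • φ x) := by
      rw [smul_smul, inv_mul_cancel₀ hc0, one_smul]
    rw [this]
    apply V.smul_mem
    rw [Int.cast_smul_eq_zsmul]
    exact hmem
  -- Smith normal form of L' inside S
  obtain ⟨o, n, snf⟩ := Submodule.smithNormalFormOfLE (Pi.basisFun ℤ (Fin m)) L' S hL'S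
  set L'' : Submodule ℤ ↥S := L'.comap S.subtype with hL''
  set bN' : Module.Basis (Fin n) ℤ ↥L' := snf.bN.map (Submodule.comapSubtypeEquivOfLe hL'S) with hbN'
  have hn : r = n := by
    have := Fintype.card_congr (bN'.indexEquiv bu)
    simpa using this.symm
  subst hn
  have ho : r = o := by
    refine le_antisymm ?_ ?_
    · have := Fintype.card_le_of_embedding snf.f
      simpa using this
    · -- o ≤ r via independent family in V
      have h1 : LinearIndependent ℚ (fun i => φ ((snf.bM i : ↥S) : Fin m → ℤ)) := by
        apply hindQ
        exact snf.bM.linearIndependent.map' S.subtype (Submodule.ker_subtype _)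
      have h2 : LinearIndependent ℚ (fun i =>
          (⟨φ ((snf.bM i : ↥S) : Fin m → ℤ), hSV _ (snf.bM i).2⟩ : ↥V)) := by
        apply LinearIndependent.of_comp V.subtype
        exact h1
      have := h2.fintype_card_le_finrank
      rwa [Fintype.card_fin, hVr] at this
  subst ho
  -- index computation
  have ha0 : ∀ i, snf.a i ≠ 0 := by
    intro i hai
    apply snf.bN.ne_zero i
    have := snf.snf i
    rw [hai, zero_smul] at this
    exact Subtype.ext this
  have hidx : L''.toAddSubgroup.index = ∏ i, (snf.a i).natAbs := by
    rw [snf.toAddSubgroup_index_eq_pow_mul_prod]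
    simp [Ideal.span_singleton_toAddSubgroup_eq_zmultiples, Int.index_zmultiples]
  have hcardQ : Nat.card (↥S ⧸ L'') = ∏ i, (snf.a i).natAbs := hidx
  -- torsion is a quotient of S / L''
  set ψ : ↥S →ₗ[ℤ] ((Fin m → ℤ) ⧸ Lsub) := Lsub.mkQ.comp S.subtype with hψ
  have hker : LinearMap.ker ψ = Lsub.comap S.subtype := by
    rw [hψ, LinearMap.ker_comp, Submodule.ker_mkQ]
  have hrange : LinearMap.range ψ = T := by
    rw [hψ, LinearMap.range_comp, Submodule.range_subtype, hS]
    exact Submodule.map_comap_eq_of_surjective Lsub.mkQ_surjective T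
  have hcardT : Nat.card ↥T = Nat.card (↥S ⧸ Lsub.comap S.subtype) := by
    rw [← hrange, ← hker]
    exact (Nat.card_congr ψ.quotKerEquivRange.toEquiv).symm
  have hfin : Finite (↥S ⧸ L'') := by
    apply Nat.finite_of_card_ne_zero
    rw [hcardQ]
    exact Finset.prod_ne_zero_iff.2 (fun i _ => Int.natAbs_ne_zero.2 (ha0 i))
  have hle0 : L'' ≤ Lsub.comap S.subtype := Submodule.comap_mono hL'le
  set π : (↥S ⧸ L'') →ₗ[ℤ] (↥S ⧸ Lsub.comap S.subtype) :=
    Submodule.mapQ L'' (Lsub.comap S.subtype) LinearMap.id (by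
      intro x hx; exact hle0 hx) with hπ
  have hπsurj : Function.Surjective π := by
    intro y
    obtain ⟨x, rfl⟩ := Submodule.mkQ_surjective _ y
    refine ⟨Submodule.Quotient.mk x, ?_⟩
    rw [hπ]
    erw [Submodule.mapQ_apply] <;> rfl
  have hle1 : Nat.card ↥T ≤ ∏ i, (snf.a i).natAbs := by
    rw [hcardT, ← hcardQ]
    exact Nat.card_le_card_of_surjective π hπsurj
  -- now the Gram determinant estimates
  set A : Matrix (Fin r) (Fin m) ℤ := Matrix.of u with hA
  set SA : Matrix (Fin r) (Fin m) ℤ :=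
    Matrix.of (fun i => ((snf.bM i : ↥S) : Fin m → ℤ)) with hSA
  set NA : Matrix (Fin r) (Fin m) ℤ :=
    Matrix.of (fun i => (((snf.bN i : ↥S) : Fin m → ℤ))) with hNA
  set σ : Equiv.Perm (Fin r) :=
    Equiv.ofBijective snf.f ((Finite.injective_iff_bijective).1 snf.f.injective) with hσ
  have hNA_E : NA = (Matrix.of fun i j => if σ i = j then snf.a i else 0) * SA := by
    ext i t
    rw [Matrix.mul_apply]
    have hsnf : ((snf.bN i : ↥S) : Fin m → ℤ)
        = snf.a i • ((snf.bM (snf.f i) : ↥S) : Fin m → ℤ) := by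
      rw [snf.snf i]; rfl
    have hLhs : NA i t = snf.a i * ((snf.bM (snf.f i) : ↥S) : Fin m → ℤ) t := by
      rw [hNA]
      show ((snf.bN i : ↥S) : Fin m → ℤ) t = _
      rw [hsnf]; rfl
    rw [hLhs]
    rw [show (∑ j, (Matrix.of fun i j => if σ i = j then snf.a i else 0) i j * SA j t)
        = ∑ j, if σ i = j then snf.a i * SA j t else 0 from
      Finset.sum_congr rfl (fun j _ => by dsimp only [Matrix.of_apply]; rw [ite_mul, zero_mul])]
    rw [Finset.sum_ite_eq Finset.univ (σ i) (fun j => snf.a i * SA j t)]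
    simp only [Finset.mem_univ, if_true]
    rfl
  have hbN'coe : ∀ i, ((bN' i : ↥L') : Fin m → ℤ) = ((snf.bN i : ↥S) : Fin m → ℤ) := by
    intro i
    rw [hbN']
    rw [Module.Basis.map_apply]
    rfl
  have hNA_C : NA = (Matrix.of fun i j' => (bu.repr (bN' i) j' : ℤ)) * A := by
    apply rowMatrix_eq
    intro i
    have hrepr := bu.sum_repr (bN' i)
    have : ((bN' i : ↥L') : Fin m → ℤ) = ∑ j, bu.repr (bN' i) j • ((bu j : ↥L') : Fin m → ℤ) := by
      conv_lhs => rw [← hrepr]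
      push_cast [map_sum]
      rfl
    rw [← hbN'coe i, this]
    congr 1
    funext j
    congr 1
    rw [hbu, Module.Basis.span_apply]
  have hdetC_sq : (Matrix.of fun i j' => (bu.repr (bN' i) j' : ℤ)).det ^ 2 = 1 := by
    have hCt : (Matrix.of fun i j' => (bu.repr (bN' i) j' : ℤ))ᵀ = bu.toMatrix bN' := by
      ext i j; rfl
    have hmul := Module.Basis.toMatrix_mul_toMatrix_flip bu bN'
    have hdet : (bu.toMatrix bN').det * (bN'.toMatrix bu).det = 1 := by
      rw [← Matrix.det_mul, hmul, Matrix.det_one]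
    have hunit : IsUnit (bu.toMatrix bN').det := IsUnit.of_mul_eq_one _ hdet
    rcases Int.isUnit_iff.1 hunit with h | h <;>
      rw [← Matrix.det_transpose, hCt] <;> simp [h]
  have hGram1 : (NA * NAᵀ).det = (A * Aᵀ).det := by
    rw [hNA_C, gram_transform, Matrix.det_mul, Matrix.det_mul, Matrix.det_transpose]
    have : (Matrix.of fun i j' => (bu.repr (bN' i) j' : ℤ)).det *
        (A * Aᵀ).det * (Matrix.of fun i j' => (bu.repr (bN' i) j' : ℤ)).det
        = (A * Aᵀ).det * ((Matrix.of fun i j' => (bu.repr (bN' i) j' : ℤ)).det ^ 2) := by ring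
    rw [this, hdetC_sq, mul_one]
  have hGram2 : (NA * NAᵀ).det = (∏ i, snf.a i)^2 * (SA * SAᵀ).det := by
    rw [hNA_E, gram_transform, Matrix.det_mul, Matrix.det_mul, Matrix.det_transpose]
    have : (Matrix.of fun i j => if σ i = j then snf.a i else 0).det *
        (SA * SAᵀ).det * (Matrix.of fun i j => if σ i = j then snf.a i else 0).det
        = ((Matrix.of fun i j => if σ i = j then snf.a i else 0).det ^ 2) * (SA * SAᵀ).det := by
      ring
    rw [this, detE_sq]
  -- positivity of the Gram determinant of the basis of S
  have hSA_pos : 1 ≤ (SA * SAᵀ).det := by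
    have hne : (SA * SAᵀ).det ≠ 0 := by
      have hcast : (((SA * SAᵀ).det : ℤ) : ℚ)
          = ((SA.map (Int.cast : ℤ → ℚ)) * (SA.map (Int.cast : ℤ → ℚ))ᵀ).det :=
        cast_det_gram (Int.castRingHom ℚ) SA
      have hind : LinearIndependent ℚ (fun i => (SA.map (Int.cast : ℤ → ℚ)) i) := by
        have h1 : LinearIndependent ℚ (fun i => φ ((snf.bM i : ↥S) : Fin m → ℤ)) := by
          apply hindQ
          exact snf.bM.linearIndependent.map' S.subtype (Submodule.ker_subtype _)
        convert h1 using 1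
        rfl
      have := det_gram_ne_zero _ hind
      intro h0
      apply this
      rw [← hcast, h0, Int.cast_zero]
    have hge : (0:ℤ) ≤ (SA * SAᵀ).det := by
      have hcast : (((SA * SAᵀ).det : ℤ) : ℝ)
          = ((SA.map (Int.cast : ℤ → ℝ)) * (SA.map (Int.cast : ℤ → ℝ))ᵀ).det :=
        cast_det_gram (Int.castRingHom ℝ) SA
      have := det_gram_nonneg (SA.map (Int.cast : ℤ → ℝ))
      rw [← hcast] at this
      exact_mod_cast this
    omega
  -- entry bound for the Gram matrix of the chosen generators
  have hAentry : ∀ i j, |(A * Aᵀ) i j| ≤ 3 := by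
    intro i j
    have hij : (A * Aᵀ) i j = ∑ t, u i t * u j t := by
      rw [Matrix.mul_apply]; rfl
    rw [hij]
    have habs1 : ∀ (a b : Fin k) (t : Fin m), |v a t * v b t| ≤ if v a t ≠ 0 then 1 else 0 := by
      intro a b t
      by_cases h : v a t = 0
      · simp [h]
      · simp only [h, ne_eq, not_false_eq_true, if_true]
        rw [abs_mul]
        have h1 : |v a t| ≤ 1 := by rcases hentries a t with h' | h' | h' <;> simp [h']
        have h2 : |v b t| ≤ 1 := by rcases hentries b t with h' | h' | h' <;> simp [h']
        calc |v a t| * |v b t| ≤ 1 * 1 := by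
              exact mul_le_mul h1 h2 (abs_nonneg _) zero_le_one
          _ = 1 := by ring
    calc |∑ t, u i t * u j t| ≤ ∑ t, |u i t * u j t| := Finset.abs_sum_le_sum_abs _ _
      _ ≤ ∑ t, (if v (jf (e i)) t ≠ 0 then (1:ℤ) else 0) := by
          apply Finset.sum_le_sum
          intro t _
          exact habs1 (jf (e i)) (jf (e j)) t
      _ = ∑ t ∈ Finset.univ.filter (fun t => v (jf (e i)) t ≠ 0), (1:ℤ) :=
          (Finset.sum_filter _ _).symm
      _ = ((Finset.univ.filter (fun t => v (jf (e i)) t ≠ 0)).card : ℤ) := by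
          rw [Finset.sum_const, nsmul_eq_mul, mul_one]
      _ ≤ 3 := by exact_mod_cast hnonzero (jf (e i))
  have hA_le : (A * Aᵀ).det ≤ ((3 * k : ℕ) : ℤ)^r := by
    have hdet := Matrix.det_le (A := A * Aᵀ) (abv := AbsoluteValue.abs) (x := 3) hAentry
    have h1 : (A * Aᵀ).det ≤ (r.factorial : ℤ) * 3 ^ r := by
      calc (A * Aᵀ).det ≤ |(A * Aᵀ).det| := le_abs_self _
        _ ≤ r.factorial • (3:ℤ)^r := by simpa using hdet
        _ = (r.factorial : ℤ) * 3 ^ r := by simp [nsmul_eq_mul]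
    calc (A * Aᵀ).det ≤ (r.factorial : ℤ) * 3 ^ r := h1
      _ ≤ (k^r : ℕ) * 3 ^ r := by
          have : r.factorial ≤ k ^ r :=
            le_trans (Nat.factorial_le_pow r) (Nat.pow_le_pow_left hrk r)
          exact mul_le_mul_of_nonneg_right (by exact_mod_cast this) (by positivity)
      _ = ((3 * k : ℕ) : ℤ)^r := by push_cast; ring
  -- combine
  have key : ((∏ i, (snf.a i).natAbs : ℕ) : ℤ)^2 ≤ ((3 * k : ℕ) : ℤ)^r := by
    have heq : ((∏ i, (snf.a i).natAbs : ℕ) : ℤ)^2 = (∏ i, snf.a i)^2 := by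
      push_cast
      rw [← Finset.abs_prod, sq_abs]
    rw [heq]
    calc (∏ i, snf.a i)^2 ≤ (∏ i, snf.a i)^2 * (SA * SAᵀ).det :=
          le_mul_of_one_le_right (sq_nonneg _) hSA_pos
      _ = (NA * NAᵀ).det := hGram2.symm
      _ = (A * Aᵀ).det := hGram1
      _ ≤ ((3 * k : ℕ) : ℤ)^r := hA_le
  -- final: convert to the real inequality
  have hNT : Nat.card (AddCommGroup.torsion ((Fin m → ℤ) ⧸ L)) = Nat.card ↥T := by
    have h : T.toAddSubgroup = AddCommGroup.torsion ((Fin m → ℤ) ⧸ L) := Submodule.torsion_int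
    rw [← h]
    rfl
  set P : ℕ := ∏ i, (snf.a i).natAbs with hP
  have h1 : (Nat.card (AddCommGroup.torsion ((Fin m → ℤ) ⧸ L)) : ℝ) ≤ (P : ℝ) := by
    rw [hNT]
    exact_mod_cast hle1
  have h2 : (P:ℝ)^2 ≤ (3*(k:ℝ))^r := by
    have hh : ((3 * k : ℕ) : ℝ)^r = (3*(k:ℝ))^r := by push_cast; ring
    rw [← hh]
    exact_mod_cast key
  have h3k : (0:ℝ) ≤ 3*(k:ℝ) := by positivity
  have hrhs : (3*(k:ℝ))^((r:ℝ)/2) = Real.sqrt ((3*(k:ℝ))^r) := by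
    rw [show ((r:ℝ)/2) = (r:ℝ) * (1/2) by ring, Real.rpow_mul h3k, Real.rpow_natCast,
      Real.sqrt_eq_rpow]
  calc (Nat.card (AddCommGroup.torsion ((Fin m → ℤ) ⧸ L)) : ℝ) ≤ (P:ℝ) := h1
    _ ≤ Real.sqrt ((3*(k:ℝ))^r) := by
        rw [show (P:ℝ) = Real.sqrt ((P:ℝ)^2) from (Real.sqrt_sq (by positivity)).symm]
        exact Real.sqrt_le_sqrt h2
    _ = (3*(k:ℝ))^((r:ℝ)/2) := hrhs.symm
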